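/- For every nonnegative integer n and every real x, (1/√π) ∫_{-∞}^{∞} H_n(y) e^{-y²} e^{ixy} dy = iⁿ xⁿ e^{-x²/4} (an identity of complex numbers, where the integral is a complex-valued integral over the real line). -/

import Mathlib

open MeasureTheory Finset
open scoped Nat

/-- Physicists' Hermite polynomial
`H_n(x) = n! · Σ_{m=0}^{⌊n/2⌋} (-1)^m (2x)^{n-2m} / (m! (n-2m)!)`. -/
noncomputable def hermiteH (n : ℕ) (x : ℝ) : ℝ :=
  (n.factorial : ℝ) * ∑ m ∈ Finset.range (n / 2 + 1),
    (-1 : ℝ) ^ m * (2 * x) ^ (n - 2 * m) /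
      ((m.factorial : ℝ) * ((n - 2 * m).factorial : ℝ))

lemma nat_fact_eq (m k : ℕ) : (2*m + k).factorial
    = 2^m * (2*m-1)‼ * (2*m+k).choose k * m.factorial * k.factorial := by
  have h1 : (2*m).factorial = 2^m * m.factorial * (2*m-1)‼ := by
    cases m with
    | zero => simp
    | succ j =>
      have e1 : 2 * (j+1) = 2*j+1+1 := by omega
      rw [e1, Nat.factorial_eq_mul_doubleFactorial, Nat.add_sub_cancel, ← e1,
        Nat.doubleFactorial_two_mul]
  have h3 := Nat.choose_mul_factorial_mul_factorial (Nat.le_add_left k (2*m))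
  rw [Nat.add_sub_cancel] at h3
  rw [← h3, h1]; ring

open Polynomial in
lemma hermiteH_eq_aeval (n : ℕ) (x : ℝ) :
    hermiteH n x = Real.sqrt 2 ^ n * Polynomial.aeval (Real.sqrt 2 * x) (Polynomial.hermite n) := by
  rw [Polynomial.aeval_eq_sum_range, natDegree_hermite]
  have himg : ((range (n/2+1)).image (fun m => n - 2*m)) ⊆ range (n+1) := by
    intro k hk; simp only [mem_image, mem_range] at *; omega
  have hzero : ∀ k ∈ range (n+1), k ∉ (range (n/2+1)).image (fun m => n - 2*m) →
      (hermite n).coeff k • (Real.sqrt 2 * x) ^ k = 0 := by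
    intro k hk hk'
    simp only [mem_image, mem_range, not_exists, not_and] at hk'
    rw [mem_range] at hk
    have h2 := hk' ((n - k)/2)
    have hodd : Odd (n + k) := by rw [Nat.odd_iff]; omega
    rw [coeff_hermite_of_odd_add hodd, zero_smul]
  rw [← Finset.sum_subset himg hzero, Finset.sum_image (by
    intro m₁ h₁ m₂ h₂ h; simp only [coe_range, Set.mem_Iio] at h₁ h₂ h; omega)]
  rw [hermiteH, Finset.mul_sum, Finset.mul_sum]
  apply Finset.sum_congr rfl
  intro m hm
  rw [mem_range] at hm
  obtain ⟨k, rfl⟩ : ∃ k, n = 2*m + k := ⟨n - 2*m, by omega⟩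
  simp only [Nat.add_sub_cancel_left]
  rw [coeff_hermite_explicit m k, zsmul_eq_mul]
  have h2 : ((2*m+k).factorial : ℝ)
      = 2^m * (2*m-1)‼ * ((2*m+k).choose k) * m.factorial * k.factorial := by
    exact_mod_cast congrArg (Nat.cast : ℕ → ℝ) (nat_fact_eq m k)
  push_cast
  rw [h2]
  have hs2 : Real.sqrt 2 ^ 2 = 2 := Real.sq_sqrt (by norm_num)
  have hp1 : Real.sqrt 2 ^ (2*m+k) = 2^m * Real.sqrt 2 ^ k := by
    rw [pow_add, pow_mul, hs2]
  have hp2 : Real.sqrt 2 ^ k * Real.sqrt 2 ^ k = 2^k := by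
    rw [← pow_add, ← two_mul, pow_mul, hs2]
  rw [hp1, mul_pow]
  have hfm : (m.factorial:ℝ) ≠ 0 := by exact_mod_cast m.factorial_ne_zero
  have hfk : (k.factorial:ℝ) ≠ 0 := by exact_mod_cast k.factorial_ne_zero
  field_simp
  linear_combination (-((2*m+k).choose k : ℝ) * x^k) * hp2

open Polynomial in
lemma hermiteH_succ' (n : ℕ) (x : ℝ) :
    hermiteH (n+1) x = 2 * x * hermiteH n x
      - Real.sqrt 2 ^ (n+1) * Polynomial.aeval (Real.sqrt 2 * x)
          (Polynomial.derivative (Polynomial.hermite n)) := by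
  rw [hermiteH_eq_aeval, Polynomial.hermite_succ, map_sub, map_mul, Polynomial.aeval_X,
    hermiteH_eq_aeval]
  have h : Real.sqrt 2 * Real.sqrt 2 = 2 := Real.mul_self_sqrt (by norm_num)
  rw [pow_succ]
  linear_combination (Real.sqrt 2 ^ n * (Polynomial.aeval (Real.sqrt 2 * x)
    (Polynomial.hermite n)) * x) * h

open Polynomial in
lemma hermiteH_hasDerivAt (n : ℕ) (x : ℝ) :
    HasDerivAt (fun y => hermiteH n y)
      (Real.sqrt 2 ^ (n+1) * Polynomial.aeval (Real.sqrt 2 * x)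
        (Polynomial.derivative (Polynomial.hermite n))) x := by
  have heq : (fun y => hermiteH n y)
      = fun y => Real.sqrt 2 ^ n * aeval (Real.sqrt 2 * y) (hermite n) :=
    funext (hermiteH_eq_aeval n)
  rw [heq]
  have hco : HasDerivAt (fun y : ℝ => Real.sqrt 2 * y) (Real.sqrt 2) x := by
    simpa using (hasDerivAt_id x).const_mul (Real.sqrt 2)
  have hp := (Polynomial.hasDerivAt_aeval (q := hermite n) (Real.sqrt 2 * x)).comp x hco
  have h2 := hp.const_mul (Real.sqrt 2 ^ n)
  exact h2.congr_deriv (by rw [pow_succ]; ring)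

lemma r_hasDerivAt (n : ℕ) (x : ℝ) :
    HasDerivAt (fun y => hermiteH n y * Real.exp (-y^2))
      (-(hermiteH (n+1) x * Real.exp (-x^2))) x := by
  have h1 := hermiteH_hasDerivAt n x
  have h2 : HasDerivAt (fun y : ℝ => Real.exp (-y^2)) (-(2*x) * Real.exp (-x^2)) x := by
    have h3 : HasDerivAt (fun y : ℝ => -y^2) (-(2*x)) x := by
      simpa using (hasDerivAt_pow 2 x).fun_neg
    simpa [mul_comm] using h3.exp
  exact (h1.mul h2).congr_deriv (by rw [hermiteH_succ']; ring)

open MeasureTheory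

lemma integrable_pow_gauss (k : ℕ) :
    Integrable (fun y : ℝ => y ^ k * Real.exp (-y^2)) := by
  have hint := (integrable_exp_neg_mul_sq (by norm_num : (0:ℝ) < 1/2)).const_mul
    ((k.factorial : ℝ) * Real.exp (1/2))
  apply hint.mono'
  · exact (Continuous.mul (continuous_pow k) (Real.continuous_exp.comp
      (continuous_pow 2).neg)).aestronglyMeasurable
  · filter_upwards with y
    rw [norm_mul, Real.norm_eq_abs, Real.norm_eq_abs, Real.abs_exp, abs_pow]
    have hk : (0:ℝ) < k.factorial := by exact_mod_cast k.factorial_pos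
    have h1 : |y|^k ≤ k.factorial * Real.exp |y| := by
      have h := Real.pow_div_factorial_le_exp |y| (abs_nonneg y) k
      rw [div_le_iff₀ hk] at h
      linarith [h]
    have hexp : Real.exp (|y| + -y^2) ≤ Real.exp (1/2 + -(1/2) * y^2) := by
      apply Real.exp_le_exp.mpr
      nlinarith [sq_abs y, sq_nonneg (|y| - 1)]
    calc |y|^k * Real.exp (-y^2)
        ≤ (k.factorial * Real.exp |y|) * Real.exp (-y^2) :=
          mul_le_mul_of_nonneg_right h1 (Real.exp_nonneg _)
      _ ≤ k.factorial * Real.exp (1/2) * Real.exp (-(1/2) * y^2) := by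
          rw [mul_assoc, ← Real.exp_add, mul_assoc, ← Real.exp_add]
          exact mul_le_mul_of_nonneg_left hexp hk.le

lemma integrable_r (n : ℕ) :
    Integrable (fun y : ℝ => hermiteH n y * Real.exp (-y^2)) := by
  have heq : (fun y : ℝ => hermiteH n y * Real.exp (-y^2)) =
      fun y => ∑ m ∈ range (n/2+1),
        ((n.factorial:ℝ) * ((-1)^m * 2^(n-2*m) / (m.factorial * (n-2*m).factorial)))
          * (y^(n-2*m) * Real.exp (-y^2)) := by
    funext y
    rw [hermiteH, Finset.mul_sum, Finset.sum_mul]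
    apply Finset.sum_congr rfl
    intro m _
    rw [mul_pow]
    ring
  rw [heq]
  exact integrable_finset_sum _ (fun m _ => (integrable_pow_gauss _).const_mul _)

noncomputable def fC (n : ℕ) : ℝ → ℂ :=
  fun y => (hermiteH n y : ℂ) * Complex.exp (-(y:ℂ)^2)

lemma fC_eq (n : ℕ) (y : ℝ) :
    fC n y = ((hermiteH n y * Real.exp (-y^2) : ℝ) : ℂ) := by
  simp only [fC, Complex.ofReal_mul, Complex.ofReal_exp]
  push_cast
  ring_nf

lemma integrable_fC (n : ℕ) : Integrable (fC n) := by
  rw [show fC n = fun y => ((hermiteH n y * Real.exp (-y^2) : ℝ) : ℂ) from funext (fC_eq n)]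
  exact (integrable_r n).ofReal

lemma fC_hasDerivAt (n : ℕ) (x : ℝ) : HasDerivAt (fC n) (-(fC (n+1) x)) x := by
  have h := (r_hasDerivAt n x).ofReal_comp
  have heq : (fun y : ℝ => ((hermiteH n y * Real.exp (-y^2) : ℝ) : ℂ)) = fC n :=
    funext (fun y => (fC_eq n y).symm)
  rw [heq] at h
  convert h using 1
  rw [fC_eq]
  push_cast
  ring

lemma main_integral (n : ℕ) (x : ℝ) :
    (∫ y : ℝ, Complex.exp (Complex.I * x * y) * fC n y)
      = (Real.sqrt Real.pi : ℂ) *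
          (Complex.I ^ n * x ^ n * Complex.exp (-(x:ℂ)^2/4)) := by
  induction n generalizing x with
  | zero =>
    have h0 : ∀ y : ℝ, fC 0 y = Complex.exp (-1 * (y:ℂ)^2) := by
      intro y; simp [fC, hermiteH]
    have hg := fourierIntegral_gaussian (b := 1) (by norm_num) (x:ℂ)
    simp_rw [h0]
    rw [hg]
    have hpi : ((Real.pi : ℂ)) ^ (1/2 : ℂ) = ((Real.sqrt Real.pi : ℝ) : ℂ) := by
      rw [Real.sqrt_eq_rpow, Complex.ofReal_cpow Real.pi_pos.le]
      norm_num
    rw [div_one, hpi]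
    norm_num
  | succ n ih =>
    set w : ℝ := -x / (2 * Real.pi) with hw
    have hg : Integrable (fC n) := integrable_fC n
    have hdiff : Differentiable ℝ (fC n) := fun y => (fC_hasDerivAt n y).differentiableAt
    have hderiv : deriv (fC n) = fun y => -(fC (n+1) y) :=
      funext fun y => (fC_hasDerivAt n y).deriv
    have hint' : Integrable (deriv (fC n)) := by
      rw [hderiv]; exact (integrable_fC (n+1)).neg
    have key := congrFun (Real.fourier_deriv hg hdiff hint') w
    rw [Real.fourier_real_eq_integral_exp_smul,
      Real.fourier_real_eq_integral_exp_smul] at key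
    have harg : ∀ v : ℝ, (-2*Real.pi*v*w : ℝ) = v * x := by
      intro v; rw [hw]; field_simp
    simp_rw [harg, hderiv, smul_eq_mul] at key
    have hker : ∀ v : ℝ, Complex.exp (((v*x : ℝ):ℂ) * Complex.I)
        = Complex.exp (Complex.I * x * v) := by
      intro v; push_cast; ring_nf
    simp_rw [hker] at key
    have hcoef : (2 * (Real.pi : ℂ) * Complex.I * (w : ℝ)) = -(Complex.I * x) := by
      rw [hw]
      have hpine : (Real.pi : ℂ) ≠ 0 := Complex.ofReal_ne_zero.mpr Real.pi_ne_zero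
      push_cast
      field_simp
    rw [hcoef] at key
    have h2 : (∫ v : ℝ, Complex.exp (Complex.I*x*v) * fC (n+1) v)
        = Complex.I * x * ∫ v : ℝ, Complex.exp (Complex.I*x*v) * fC n v := by
      have hL : (∫ v : ℝ, Complex.exp (Complex.I*x*v) * (-(fC (n+1) v)))
          = -∫ v : ℝ, Complex.exp (Complex.I*x*v) * fC (n+1) v := by
        rw [← MeasureTheory.integral_neg]
        congr 1; funext v; ring
      rw [hL] at key
      linear_combination -key
    rw [h2, ih]
    rw [pow_succ, pow_succ]
    ring

theorem hermite_fourier_monomial (n : ℕ) (x : ℝ) :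
    (1 / Real.sqrt Real.pi : ℂ) *
      ∫ y : ℝ, (hermiteH n y : ℂ) * Complex.exp (-(y : ℂ) ^ 2) *
        Complex.exp (Complex.I * (x : ℂ) * (y : ℂ)) =
    Complex.I ^ n * (x : ℂ) ^ n * Complex.exp (-(x : ℂ) ^ 2 / 4) := by
  have h1 : (∫ y : ℝ, (hermiteH n y : ℂ) * Complex.exp (-(y : ℂ) ^ 2) *
        Complex.exp (Complex.I * (x : ℂ) * (y : ℂ)))
      = ∫ y : ℝ, Complex.exp (Complex.I * x * y) * fC n y := by
    congr 1; funext y; rw [fC]; ring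
  rw [h1, main_integral, ← mul_assoc]
  have hne : ((Real.sqrt Real.pi : ℝ) : ℂ) ≠ 0 :=
    Complex.ofReal_ne_zero.mpr (by positivity)
  rw [one_div, inv_mul_cancel₀ hne, one_mul]
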